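/- The minimal specific energy of the two-dimensional Euclid's hat equals −1/2; that is, the infimum over all integers n ≥ 2, all points x₁, …, xₙ ∈ ℝ² and all charges σ₁, …, σₙ ∈ {−1, 1} of (1/n)·∑_{1 ≤ i < j ≤ n} σᵢ σⱼ h(|xᵢ − xⱼ|) is equal to −1/2. -/

import Mathlib

open Real

/-- The two-dimensional Euclid's hat function:
`h w = (2/π)(arccos w − w√(1−w²))` for `0 ≤ w ≤ 1` and `h w = 0` for `w > 1`. -/
noncomputable def euclidHat (w : ℝ) : ℝ :=
  if w ≤ 1 then (2 / π) * (Real.arccos w - w * Real.sqrt (1 - w ^ 2)) else 0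

open MeasureTheory intervalIntegral Set

local notation "E2" => EuclideanSpace ℝ (Fin 2)


lemma my_integral_sqrt (d : ℝ) (h0 : -1 ≤ d) (h1 : d ≤ 1) :
    ∫ s in d..(1:ℝ), Real.sqrt (1 - s^2)
      = (Real.arccos d - d * Real.sqrt (1 - d^2)) / 2 := by
  have hc : ContinuousOn (fun s : ℝ => (Real.arcsin s + s * Real.sqrt (1 - s^2)) / 2)
      (Set.Icc d 1) := by
    apply Continuous.continuousOn
    exact ((Real.continuous_arcsin.add (continuous_id.mul (by fun_prop))).div_const 2)
  have hd : ∀ x ∈ Set.Ioo d (1:ℝ),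
      HasDerivAt (fun s : ℝ => (Real.arcsin s + s * Real.sqrt (1 - s^2)) / 2)
        (Real.sqrt (1 - x^2)) x := by
    intro x hx
    obtain ⟨hx1, hx2⟩ := hx
    have hlt : -1 < x := lt_of_le_of_lt h0 hx1
    have hpos : 0 < 1 - x^2 := by nlinarith
    have harc : HasDerivAt Real.arcsin (1 / Real.sqrt (1 - x^2)) x :=
      Real.hasDerivAt_arcsin hlt.ne' hx2.ne
    have hinner : HasDerivAt (fun s : ℝ => 1 - s^2) (-(2*x)) x := by
      simpa using ((hasDerivAt_pow 2 x).const_sub 1)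
    have hsqrt : HasDerivAt (fun s : ℝ => Real.sqrt (1 - s^2))
        (-(2*x) / (2 * Real.sqrt (1 - x^2))) x := hinner.sqrt (by positivity)
    have hmul : HasDerivAt (fun s : ℝ => s * Real.sqrt (1 - s^2))
        (1 * Real.sqrt (1 - x^2) + x * (-(2*x) / (2 * Real.sqrt (1 - x^2)))) x :=
      (hasDerivAt_id x).mul hsqrt
    have hD := (harc.add hmul).div_const 2
    refine hD.congr_deriv ?_
    have h2 : Real.sqrt (1 - x^2) * Real.sqrt (1 - x^2) = 1 - x^2 :=
      Real.mul_self_sqrt hpos.le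
    have h3 : Real.sqrt (1 - x^2) ≠ 0 := by positivity
    field_simp
    nlinarith [Real.sqrt_nonneg (1 - x^2)]
  have hi : IntervalIntegrable (fun s : ℝ => Real.sqrt (1 - s^2)) volume d 1 :=
    Continuous.intervalIntegrable (by fun_prop) _ _
  have key := intervalIntegral.integral_eq_sub_of_hasDerivAt_of_le h1 hc hd hi
  rw [key]
  simp only [Real.arcsin_one, Real.arccos_eq_pi_div_two_sub_arcsin]
  norm_num
  ring

lemma lens_volume (d : ℝ) (hd0 : 0 ≤ d) (hd1 : d ≤ 1) :
    volume {p : ℝ × ℝ | p.1^2 + p.2^2 < 1/4 ∧ (p.1 - d)^2 + p.2^2 < 1/4}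
      = ENNReal.ofReal (∫ s in d..(1:ℝ), Real.sqrt (1 - s^2)) := by
  set G : ℝ → ℝ := fun u => Real.sqrt (1/4 - max (u^2) ((u-d)^2)) with hG
  have hGcont : Continuous G := by
    apply Real.continuous_sqrt.comp
    exact (continuous_const.sub ((continuous_pow 2).max (by fun_prop)))
  have hGnn : ∀ u, 0 ≤ G u := fun u => Real.sqrt_nonneg _
  set s : Set ℝ := Set.Ioo (d - 1/2) (1/2) with hs
  -- positivity of 1/4 - max on s
  have hcpos : ∀ u ∈ s, 0 < 1/4 - max (u^2) ((u-d)^2) := by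
    rintro u ⟨h1, h2⟩
    have hu2 : u^2 < 1/4 := by nlinarith
    have hud2 : (u-d)^2 < 1/4 := by nlinarith
    simp only [sub_pos, max_lt_iff]
    exact ⟨hu2, hud2⟩
  -- set identification
  have hset : {p : ℝ × ℝ | p.1^2 + p.2^2 < 1/4 ∧ (p.1 - d)^2 + p.2^2 < 1/4}
      = regionBetween (-G) G s := by
    ext ⟨u, v⟩
    simp only [Set.mem_setOf_eq, regionBetween, Set.mem_Ioo, Pi.neg_apply, neg_lt]
    constructor
    · rintro ⟨h1, h2⟩
      have hv2 : 0 ≤ v^2 := sq_nonneg v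
      have hus : u ∈ s := by
        constructor <;> nlinarith
      have hvc : v^2 < 1/4 - max (u^2) ((u-d)^2) := by
        rcases max_cases (u^2) ((u-d)^2) with ⟨h, _⟩ | ⟨h, _⟩ <;> rw [h] <;> nlinarith
      have habs : |v| < G u := by
        rw [hG, Real.lt_sqrt (abs_nonneg v), sq_abs]; exact hvc
      rcases abs_lt.1 habs with ⟨ha, hb⟩
      exact ⟨hus, by linarith, hb⟩
    · rintro ⟨hus, hv1, hv2⟩
      have habs : |v| < G u := abs_lt.2 ⟨by linarith, hv2⟩
      have hvc : v^2 < 1/4 - max (u^2) ((u-d)^2) := by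
        rw [hG, Real.lt_sqrt (abs_nonneg v), sq_abs] at habs; exact habs
      constructor
      · nlinarith [le_max_left (u^2) ((u-d)^2)]
      · nlinarith [le_max_right (u^2) ((u-d)^2)]
  rw [hset, MeasureTheory.Measure.volume_eq_prod]
  have hGint : IntegrableOn G s volume :=
    (hGcont.integrableOn_Icc).mono_set Set.Ioo_subset_Icc_self
  rw [volume_regionBetween_eq_integral (hGint.neg) hGint measurableSet_Ioo
    (fun x _ => by simp only [Pi.neg_apply]; linarith [hGnn x])]
  congr 1
  have h2G : ∫ u in s, (G - -G) u = ∫ u in s, 2 * G u := by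
    apply setIntegral_congr_fun measurableSet_Ioo
    intro u _; simp [two_mul]
  rw [h2G]
  -- Ioo to interval integral
  have hab : d - 1/2 ≤ 1/2 := by linarith
  rw [hs, ← MeasureTheory.integral_Ioc_eq_integral_Ioo,
    ← intervalIntegral.integral_of_le hab]
  -- split at d/2
  have hint2G : ∀ a b : ℝ, IntervalIntegrable (fun u => 2 * G u) volume a b :=
    fun a b => ((continuous_const.mul hGcont)).intervalIntegrable a b
  rw [← intervalIntegral.integral_add_adjacent_intervals (a := d - 1/2) (b := d/2)
    (c := 1/2) (hint2G _ _) (hint2G _ _)]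
  set f : ℝ → ℝ := fun t => 2 * Real.sqrt (1/4 - t^2) with hf
  have hpiece1 : ∫ u in (d - 1/2)..(d/2), 2 * G u = ∫ u in (d - 1/2)..(d/2), f (d - u) := by
    apply intervalIntegral.integral_congr
    intro u hu
    rw [Set.uIcc_of_le (by linarith)] at hu
    obtain ⟨h1, h2⟩ := hu
    have hmax : max (u^2) ((u-d)^2) = (u-d)^2 := max_eq_right (by nlinarith)
    simp only [hG, hf, hmax]
    congr 2
    ring_nf
  have hpiece2 : ∫ u in (d/2)..(1/2), 2 * G u = ∫ u in (d/2)..(1/2), f u := by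
    apply intervalIntegral.integral_congr
    intro u hu
    rw [Set.uIcc_of_le (by linarith)] at hu
    obtain ⟨h1, h2⟩ := hu
    have hmax : max (u^2) ((u-d)^2) = u^2 := max_eq_left (by nlinarith)
    simp only [hG, hf, hmax]
  rw [hpiece1, hpiece2, intervalIntegral.integral_comp_sub_left f d]
  have : d - (d - 1/2) = 1/2 := by ring
  rw [this]
  have hdd : d - d/2 = d/2 := by ring
  rw [hdd, ← two_mul]
  -- now  2 * ∫ t in (d/2)..(1/2), f t = ∫ s in d..1, √(1-s²)
  have hfg : ∀ t : ℝ, f t = Real.sqrt (1 - (2*t)^2) := by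
    intro t
    have : (1:ℝ) - (2*t)^2 = 4 * (1/4 - t^2) := by ring
    rw [hf, this, Real.sqrt_mul (by norm_num : (0:ℝ) ≤ 4)]
    norm_num
  simp only [hfg]
  rw [intervalIntegral.integral_comp_mul_left (fun s => Real.sqrt (1 - s^2))
    (by norm_num : (2:ℝ) ≠ 0)]
  norm_num [mul_div_assoc]
  rw [show 2*(d/2) = d by ring]
  ring

lemma ball_inter_volume (x y : E2) :
    volume (Metric.ball x (1/2) ∩ Metric.ball y (1/2))
      = ENNReal.ofReal ((π/4) * euclidHat ‖x - y‖) := by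
  set d : ℝ := ‖x - y‖ with hd
  have hd0 : 0 ≤ d := norm_nonneg _
  by_cases hd1 : d ≤ 1
  swap
  · -- disjoint balls
    have hempty : Metric.ball x (1/2) ∩ Metric.ball y (1/2) = (∅ : Set E2) := by
      ext z
      simp only [Set.mem_inter_iff, Metric.mem_ball, Set.mem_empty_iff_false, iff_false]
      rintro ⟨h1, h2⟩
      have : dist x y ≤ dist z x + dist z y := by
        rw [dist_comm z x]; exact dist_triangle x z y
      rw [dist_eq_norm] at this
      push_neg at hd1
      linarith
    rw [hempty, euclidHat, if_neg hd1]
    simp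
  · -- construct isometry sending y - x to single 0 d... rather x - y
    have hex : ∃ f : E2 ≃ₗᵢ[ℝ] E2, f (y - x) = EuclideanSpace.single 0 d := by
      rcases eq_or_lt_of_le hd0 with h0 | h0
      · have : y - x = 0 := by
          rw [← norm_eq_zero]; rw [norm_sub_rev, ← hd, ← h0]
        refine ⟨LinearIsometryEquiv.refl ℝ E2, ?_⟩
        rw [this, ← h0]
        simp [map_zero]
        ext j; simp [EuclideanSpace.single_apply]
      · set u : E2 := d⁻¹ • (y - x) with hu
        have hnu : ‖u‖ = 1 := by
          rw [hu, norm_smul, norm_inv, Real.norm_eq_abs, abs_of_pos h0,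
            norm_sub_rev, ← hd, inv_mul_cancel₀ h0.ne']
        have hon : Orthonormal ℝ (Set.restrict ({0} : Set (Fin 2)) (fun _ => u)) := by
          constructor
          · intro i; exact hnu
          · intro i j hij
            exact absurd (Subsingleton.elim i j) hij
        obtain ⟨b, hb⟩ := hon.exists_orthonormalBasis_extension_of_card_eq
          (by simp [finrank_euclideanSpace])
        refine ⟨b.repr, ?_⟩
        have hb0 : b 0 = u := hb 0 (by simp)
        have : y - x = d • u := by
          rw [hu, smul_smul, mul_inv_cancel₀ h0.ne', one_smul]
        rw [this, _root_.map_smul, ← hb0, b.repr_self]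
        ext j
        simp [EuclideanSpace.single_apply]
    obtain ⟨f, hf⟩ := hex
    set p : E2 := EuclideanSpace.single 0 d with hp
    -- the rigid motion z ↦ f (z - x)
    set ψ : E2 → E2 := fun z => f (z - x) with hψ
    have hψmp : MeasurePreserving ψ volume volume :=
      f.measurePreserving.comp (measurePreserving_sub_right volume x)
    have hψiso : ∀ z w : E2, dist (ψ z) (ψ w) = dist z w := by
      intro z w
      simp only [hψ, dist_eq_norm, ← map_sub, f.norm_map]
      congr 1; abel
    have hψx : ψ x = 0 := by simp [hψ]
    have hψy : ψ y = p := by simp only [hψ]; exact hf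
    have hinter : Metric.ball x (1/2) ∩ Metric.ball y (1/2)
        = ψ ⁻¹' (Metric.ball (0 : E2) (1/2) ∩ Metric.ball p (1/2)) := by
      ext z
      simp only [Set.mem_inter_iff, Set.mem_preimage, Metric.mem_ball]
      rw [← hψiso z x, ← hψiso z y, hψx, hψy]
    rw [hinter, hψmp.measure_preimage]
    swap
    · exact ((Metric.isOpen_ball.inter Metric.isOpen_ball).measurableSet).nullMeasurableSet
    -- transfer to ℝ × ℝ
    set Φ : E2 → ℝ × ℝ :=
      (MeasurableEquiv.finTwoArrow : (Fin 2 → ℝ) ≃ᵐ ℝ × ℝ) ∘ (MeasurableEquiv.toLp 2 (Fin 2 → ℝ)).symm with hΦ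
    have hΦmp : MeasurePreserving Φ volume volume :=
      (MeasureTheory.volume_preserving_finTwoArrow ℝ).comp
        (EuclideanSpace.volume_preserving_symm_measurableEquiv_toLp (Fin 2))
    have hΦz : ∀ z : E2, Φ z = (z 0, z 1) := fun z => rfl
    have hlens : Metric.ball (0 : E2) (1/2) ∩ Metric.ball p (1/2)
        = Φ ⁻¹' {q : ℝ × ℝ | q.1^2 + q.2^2 < 1/4 ∧ (q.1 - d)^2 + q.2^2 < 1/4} := by
      ext z
      simp only [Set.mem_inter_iff, Set.mem_preimage, Metric.mem_ball, Set.mem_setOf_eq, hΦz]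
      have hn : dist z 0 = Real.sqrt ((z 0)^2 + (z 1)^2) := by
        rw [EuclideanSpace.dist_eq, Fin.sum_univ_two]
        simp [Real.dist_eq, sq_abs]
      have hpd : dist z p = Real.sqrt ((z 0 - d)^2 + (z 1)^2) := by
        rw [EuclideanSpace.dist_eq, Fin.sum_univ_two]
        have h1 : p 0 = d := by simp [hp, EuclideanSpace.single_apply]
        have h2 : p 1 = 0 := by simp [hp, EuclideanSpace.single_apply]
        rw [h1, h2]
        simp [Real.dist_eq, sq_abs]
      rw [hn, hpd, Real.sqrt_lt' (by norm_num : (0:ℝ) < 1/2),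
        Real.sqrt_lt' (by norm_num : (0:ℝ) < 1/2)]
      norm_num
    rw [hlens, hΦmp.measure_preimage]
    swap
    · rw [Set.setOf_and]
      exact ((measurableSet_lt (by fun_prop) measurable_const).inter
        (measurableSet_lt (by fun_prop) measurable_const)).nullMeasurableSet
    rw [lens_volume d hd0 hd1, my_integral_sqrt d (by linarith) hd1]
    rw [euclidHat, if_pos hd1]
    congr 1
    have hπ : (π : ℝ) ≠ 0 := Real.pi_ne_zero
    field_simp
    ring

lemma euclidHat_nonneg (w : ℝ) (hw : 0 ≤ w) : 0 ≤ euclidHat w := by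
  rw [euclidHat]
  split_ifs with h
  · have := my_integral_sqrt w (by linarith) h
    have hnn : 0 ≤ ∫ s in w..(1:ℝ), Real.sqrt (1 - s^2) :=
      intervalIntegral.integral_nonneg h (fun u _ => Real.sqrt_nonneg _)
    rw [this] at hnn
    have hπ : 0 < (2:ℝ)/π := by positivity
    nlinarith
  · exact le_refl _


lemma euclidHat_zero : euclidHat 0 = 1 := by
  rw [euclidHat, if_pos (by norm_num)]
  rw [Real.arccos_zero]
  have hπ : (π : ℝ) ≠ 0 := Real.pi_ne_zero
  field_simp
  simp


lemma posdef (n : ℕ) (x : Fin n → E2) (σ : Fin n → ℝ) :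
    0 ≤ ∑ i : Fin n, ∑ j : Fin n, σ i * σ j * euclidHat ‖x i - x j‖ := by
  set B : Fin n → Set E2 := fun i => Metric.ball (x i) (1/2) with hB
  set f : Fin n → E2 → ℝ := fun i => (B i).indicator 1 with hf
  have hBm : ∀ i, MeasurableSet (B i) := fun i => Metric.isOpen_ball.measurableSet
  have hprod : ∀ i j, ∀ z, f i z * f j z = (B i ∩ B j).indicator 1 z := by
    intro i j z
    simp only [hf]
    rw [← Set.inter_indicator_mul]
    simp [Set.indicator]
  have hfin : ∀ i j, volume (B i ∩ B j) < ⊤ :=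
    fun i j => lt_of_le_of_lt (measure_mono Set.inter_subset_left) measure_ball_lt_top
  have hgint : ∀ i j, Integrable (fun z => f i z * f j z) volume := by
    intro i j
    refine Integrable.congr ?_ (Filter.Eventually.of_forall (fun z => (hprod i j z).symm))
    rw [integrable_indicator_iff ((hBm i).inter (hBm j))]
    exact integrableOn_const (hfin i j).ne
  have hIntegral : ∀ i j, ∫ z, f i z * f j z
      = (π/4) * euclidHat ‖x i - x j‖ := by
    intro i j
    rw [integral_congr_ae (Filter.Eventually.of_forall (hprod i j)),
      integral_indicator_one ((hBm i).inter (hBm j)), hB]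
    simp only
    rw [measureReal_def, ball_inter_volume (x i) (x j), ENNReal.toReal_ofReal]
    exact mul_nonneg (by positivity) (euclidHat_nonneg _ (norm_nonneg _))
  have hsq : ∀ z : E2, (∑ i, σ i * f i z)^2
      = ∑ i, ∑ j, (σ i * σ j) * (f i z * f j z) := by
    intro z
    rw [sq, Finset.sum_mul_sum]
    exact Finset.sum_congr rfl fun i _ => Finset.sum_congr rfl fun j _ => by ring
  have hterm : ∀ i j, Integrable (fun z => (σ i * σ j) * (f i z * f j z)) volume :=
    fun i j => (hgint i j).const_mul _
  have key : (0:ℝ) ≤ ∑ i, ∑ j, (σ i * σ j) * ((π/4) * euclidHat ‖x i - x j‖) := by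
    have h1 : (0:ℝ) ≤ ∫ z, (∑ i, σ i * f i z)^2 :=
      integral_nonneg (fun z => sq_nonneg _)
    have h2 : ∫ z, (∑ i, σ i * f i z)^2
        = ∑ i, ∑ j, (σ i * σ j) * ((π/4) * euclidHat ‖x i - x j‖) := by
      rw [integral_congr_ae (Filter.Eventually.of_forall (fun z => hsq z))]
      rw [integral_finset_sum _ (fun i _ => integrable_finset_sum _ (fun j _ => hterm i j))]
      refine Finset.sum_congr rfl fun i _ => ?_
      rw [integral_finset_sum _ (fun j _ => hterm i j)]
      refine Finset.sum_congr rfl fun j _ => ?_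
      rw [MeasureTheory.integral_const_mul, hIntegral i j]
    linarith [h2 ▸ h1]
  have hfact : ∑ i, ∑ j, (σ i * σ j) * ((π/4) * euclidHat ‖x i - x j‖)
      = (π/4) * ∑ i, ∑ j, σ i * σ j * euclidHat ‖x i - x j‖ := by
    rw [Finset.mul_sum]
    refine Finset.sum_congr rfl fun i _ => ?_
    rw [Finset.mul_sum]
    exact Finset.sum_congr rfl fun j _ => by ring
  rw [hfact] at key
  have hπ : (0:ℝ) < π/4 := by positivity
  nlinarith

theorem minimal_specific_energy_euclidHat :
    sInf { e : ℝ | ∃ (n : ℕ), 2 ≤ n ∧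
        ∃ (x : Fin n → EuclideanSpace ℝ (Fin 2)) (σ : Fin n → ℝ),
          (∀ j, σ j = 1 ∨ σ j = -1) ∧
          e = (1 / (n : ℝ)) *
              ∑ i : Fin n, ∑ j ∈ Finset.univ.filter (fun j => i < j),
                σ i * σ j * euclidHat ‖x i - x j‖ } = -(1 / 2) := by
  have hmem : -(1/2 : ℝ) ∈ { e : ℝ | ∃ (n : ℕ), 2 ≤ n ∧
      ∃ (x : Fin n → EuclideanSpace ℝ (Fin 2)) (σ : Fin n → ℝ),
        (∀ j, σ j = 1 ∨ σ j = -1) ∧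
        e = (1 / (n : ℝ)) *
            ∑ i : Fin n, ∑ j ∈ Finset.univ.filter (fun j => i < j),
              σ i * σ j * euclidHat ‖x i - x j‖ } := by
    refine ⟨2, le_refl 2, fun _ => 0, ![1, -1], ?_, ?_⟩
    · intro j
      fin_cases j <;> simp
    · have hf0 : (Finset.univ.filter (fun j => (0 : Fin 2) < j)) = {1} := by decide
      have hf1 : (Finset.univ.filter (fun j => (1 : Fin 2) < j)) = ∅ := by decide
      rw [Fin.sum_univ_two, hf0, hf1, Finset.sum_singleton, Finset.sum_empty]
      simp only [sub_zero, norm_zero, euclidHat_zero]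
      norm_num
  have hlb : ∀ e ∈ { e : ℝ | ∃ (n : ℕ), 2 ≤ n ∧
      ∃ (x : Fin n → EuclideanSpace ℝ (Fin 2)) (σ : Fin n → ℝ),
        (∀ j, σ j = 1 ∨ σ j = -1) ∧
        e = (1 / (n : ℝ)) *
            ∑ i : Fin n, ∑ j ∈ Finset.univ.filter (fun j => i < j),
              σ i * σ j * euclidHat ‖x i - x j‖ }, -(1/2 : ℝ) ≤ e := by
    rintro e ⟨n, hn, x, σ, hσ, rfl⟩
    set a : Fin n → Fin n → ℝ := fun i j => σ i * σ j * euclidHat ‖x i - x j‖ with ha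
    have hsymm : ∀ i j, a i j = a j i := by
      intro i j
      simp only [ha]
      rw [norm_sub_rev]
      ring
    have hdiag : ∀ i, a i i = 1 := by
      intro i
      simp only [ha, sub_self, norm_zero, euclidHat_zero, mul_one]
      rcases hσ i with h | h <;> rw [h] <;> norm_num
    have hQ : (0:ℝ) ≤ ∑ i, ∑ j, a i j := posdef n x σ
    set T : ℝ := ∑ i, ∑ j ∈ Finset.univ.filter (fun j => i < j), a i j with hT
    -- decompose
    have hdecomp : ∑ i, ∑ j, a i j = 2 * T + n := by
      have hsplit : ∀ i : Fin n, ∑ j, a i j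
          = (∑ j ∈ Finset.univ.filter (fun j => i < j), a i j)
            + ((∑ j ∈ Finset.univ.filter (fun j => j < i), a i j) + a i i) := by
        intro i
        rw [← Finset.sum_filter_add_sum_filter_not Finset.univ (fun j => i < j)]
        congr 1
        have : Finset.univ.filter (fun j => ¬ i < j)
            = insert i (Finset.univ.filter (fun j => j < i)) := by
          ext j
          simp only [Finset.mem_filter, Finset.mem_univ, true_and, Finset.mem_insert,
            not_lt]
          constructor
          · intro h
            rcases lt_or_eq_of_le h with h' | h'
            · exact Or.inr h'
            · exact Or.inl h'
          · rintro (rfl | h)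
            · exact le_refl _
            · exact le_of_lt h
        rw [this, Finset.sum_insert (by simp)]
        ring
      have hlower : ∑ i, ∑ j ∈ Finset.univ.filter (fun j => j < i), a i j = T := by
        have e1 : ∑ i, ∑ j ∈ Finset.univ.filter (fun j => j < i), a i j
            = ∑ i, ∑ j, if j < i then a i j else 0 := by
          refine Finset.sum_congr rfl fun i _ => ?_
          rw [Finset.sum_filter]
        have e2 : ∑ i : Fin n, ∑ j : Fin n, (if j < i then a i j else 0)
            = ∑ j : Fin n, ∑ i : Fin n, (if j < i then a i j else 0) :=
          Finset.sum_comm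
        rw [e1, e2, hT]
        refine Finset.sum_congr rfl fun j _ => ?_
        rw [Finset.sum_filter]
        exact Finset.sum_congr rfl fun i _ => by rw [hsymm]
      calc ∑ i, ∑ j, a i j
          = ∑ i, ((∑ j ∈ Finset.univ.filter (fun j => i < j), a i j)
            + ((∑ j ∈ Finset.univ.filter (fun j => j < i), a i j) + a i i)) :=
            Finset.sum_congr rfl fun i _ => hsplit i
        _ = T + (T + n) := by
            rw [Finset.sum_add_distrib, Finset.sum_add_distrib, hlower]
            congr 2
            rw [Finset.sum_congr rfl fun i _ => hdiag i]
            simp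
        _ = 2 * T + n := by ring
    rw [hdecomp] at hQ
    have hn0 : (0:ℝ) < n := by
      have : 0 < n := lt_of_lt_of_le (by norm_num) hn
      exact_mod_cast this
    have h1 : -((n:ℝ)/2) ≤ T := by linarith
    have h2 : -(1/2:ℝ) = (1/(n:ℝ)) * (-((n:ℝ)/2)) := by field_simp
    rw [h2]
    exact mul_le_mul_of_nonneg_left h1 (by positivity)
  exact IsLeast.csInf_eq ⟨hmem, hlb⟩
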